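/- Let (Ω, μ) be a σ-finite measure space, let p : Ω → ℝ be μ-integrable, let y : Ω → ℝ be measurable, and let z : ℝ → ℝ be Lebesgue-integrable. Define P : ℝ → ℝ by P(s) = ∫_{{x : y(x) ≥ s}} p dμ for s ≥ 0 and P(s) = −∫_{{x : y(x) ≤ s}} p dμ for s < 0. Then ∫_Ω g_z(y(x)) · p(x) dμ(x) = ∫_ℝ z(s) P(s) ds. -/

import Mathlib

open Set Filter Topology MeasureTheory intervalIntegral

lemma aux_w_integral (z : ℝ → ℝ) (t : ℝ) :
    ∫ s, z s * (if 0 ≤ s then (if s ≤ t then (1:ℝ) else 0)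
        else -(if t ≤ s then (1:ℝ) else 0)) = ∫ s in (0:ℝ)..t, z s := by
  rcases le_or_gt 0 t with ht | ht
  · have heq : (fun s => z s * (if 0 ≤ s then (if s ≤ t then (1:ℝ) else 0)
        else -(if t ≤ s then (1:ℝ) else 0))) = Set.indicator (Set.Icc 0 t) z := by
      funext s
      by_cases h0 : 0 ≤ s
      · by_cases h1 : s ≤ t
        · simp [Set.indicator, h0, h1]
        · simp [Set.indicator, h0, h1]
      · have h1 : ¬ t ≤ s := by push_neg at h0 ⊢; linarith
        simp [Set.indicator, h0, h1]
    rw [heq, MeasureTheory.integral_indicator measurableSet_Icc,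
      intervalIntegral.integral_of_le ht, MeasureTheory.integral_Icc_eq_integral_Ioc]
  · have heq : (fun s => z s * (if 0 ≤ s then (if s ≤ t then (1:ℝ) else 0)
        else -(if t ≤ s then (1:ℝ) else 0))) = fun s => -Set.indicator (Set.Ico t 0) z s := by
      funext s
      by_cases h0 : 0 ≤ s
      · have h1 : ¬ s ≤ t := by linarith
        simp [Set.indicator, h0, h1, Set.mem_Ico, not_lt.mpr h0]
      · by_cases h1 : t ≤ s
        · simp [Set.indicator, h0, h1, Set.mem_Ico, lt_of_not_ge h0]
        · simp [Set.indicator, h0, h1, Set.mem_Ico]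
    rw [heq, MeasureTheory.integral_neg, MeasureTheory.integral_indicator measurableSet_Ico,
      intervalIntegral.integral_symm, intervalIntegral.integral_of_le ht.le,
      MeasureTheory.integral_Ico_eq_integral_Ioo, MeasureTheory.integral_Ioc_eq_integral_Ioo]

/-- Fubini-type identity `∫_Ω g_z(y(x)) p(x) dμ(x) = ∫_ℝ z(s) P(s) ds`, where
`P(s) = ∫_{{y ≥ s}} p dμ` for `s ≥ 0` and `P(s) = −∫_{{y ≤ s}} p dμ` for `s < 0`. -/
theorem integral_gz_composition_eq_integral_levelsets {Ω : Type*} [MeasurableSpace Ω]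
    (μ : Measure Ω) [SigmaFinite μ] (p : Ω → ℝ) (hp : Integrable p μ)
    (y : Ω → ℝ) (hy : Measurable y)
    (z : ℝ → ℝ) (hz : Integrable z (volume : Measure ℝ)) :
    ∫ x, (∫ s in (0:ℝ)..(y x), z s) * p x ∂μ =
      ∫ s, z s *
        (if 0 ≤ s then ∫ x in {x | s ≤ y x}, p x ∂μ
          else -∫ x in {x | y x ≤ s}, p x ∂μ) := by
  set W : Ω → ℝ → ℝ := fun x s => if 0 ≤ s then (if s ≤ y x then (1:ℝ) else 0)
      else -(if y x ≤ s then (1:ℝ) else 0) with hW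
  have hWmeas : Measurable (fun q : Ω × ℝ => W q.1 q.2) := by
    apply Measurable.ite (measurableSet_le measurable_const measurable_snd)
    · exact Measurable.ite (measurableSet_le measurable_snd (hy.comp measurable_fst))
        measurable_const measurable_const
    · exact (Measurable.ite (measurableSet_le (hy.comp measurable_fst) measurable_snd)
        measurable_const measurable_const).neg
  have hWle : ∀ x s, |W x s| ≤ 1 := by
    intro x s
    rw [hW]
    dsimp only
    split_ifs <;> simp
  -- the function on the product
  have hF_aesm : AEStronglyMeasurable
      (fun q : Ω × ℝ => (z q.2 * W q.1 q.2) * p q.1) (μ.prod volume) := by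
    exact ((hz.aestronglyMeasurable.comp_snd.mul hWmeas.aestronglyMeasurable).mul
      hp.aestronglyMeasurable.comp_fst)
  have hG : Integrable (fun q : Ω × ℝ => p q.1 * z q.2) (μ.prod volume) :=
    hp.mul_prod hz
  have hFint : Integrable (fun q : Ω × ℝ => (z q.2 * W q.1 q.2) * p q.1) (μ.prod volume) := by
    refine hG.norm.mono' hF_aesm ?_
    refine Filter.Eventually.of_forall fun q => ?_
    have : ‖(z q.2 * W q.1 q.2) * p q.1‖ = |z q.2| * |W q.1 q.2| * |p q.1| := by
      simp [abs_mul]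
    rw [this]
    have h1 : |z q.2| * |W q.1 q.2| * |p q.1| ≤ |z q.2| * 1 * |p q.1| :=
      mul_le_mul_of_nonneg_right
        (mul_le_mul_of_nonneg_left (hWle _ _) (abs_nonneg _)) (abs_nonneg _)
    calc |z q.2| * |W q.1 q.2| * |p q.1| ≤ |z q.2| * 1 * |p q.1| := h1
      _ = ‖p q.1 * z q.2‖ := by simp [abs_mul]; ring
  have swap := MeasureTheory.integral_integral_swap
    (f := fun (x : Ω) (s : ℝ) => (z s * W x s) * p x) hFint
  have hL : ∀ x, (∫ s in (0:ℝ)..(y x), z s) * p x = ∫ s, (z s * W x s) * p x := by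
    intro x
    rw [← aux_w_integral z (y x), ← MeasureTheory.integral_mul_const]
  have hR : ∀ s, ∫ x, (z s * W x s) * p x ∂μ =
      z s * (if 0 ≤ s then ∫ x in {x | s ≤ y x}, p x ∂μ
        else -∫ x in {x | y x ≤ s}, p x ∂μ) := by
    intro s
    by_cases h0 : 0 ≤ s
    · have : (fun x => (z s * W x s) * p x)
          = fun x => z s * Set.indicator {x | s ≤ y x} p x := by
        funext x
        by_cases h1 : s ≤ y x <;>
          simp [hW, Set.indicator, h0, h1]
      rw [this, MeasureTheory.integral_const_mul, MeasureTheory.integral_indicator (measurableSet_le measurable_const hy),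
        if_pos h0]
    · have : (fun x => (z s * W x s) * p x)
          = fun x => -(z s * Set.indicator {x | y x ≤ s} p x) := by
        funext x
        by_cases h1 : y x ≤ s <;>
          simp [hW, Set.indicator, h0, h1] <;> ring
      rw [this, MeasureTheory.integral_neg, MeasureTheory.integral_const_mul,
        MeasureTheory.integral_indicator (measurableSet_le hy measurable_const), if_neg h0,
        mul_neg]
  calc ∫ x, (∫ s in (0:ℝ)..(y x), z s) * p x ∂μ
      = ∫ x, (∫ s, (z s * W x s) * p x) ∂μ :=
        MeasureTheory.integral_congr_ae (Filter.Eventually.of_forall fun x => hL x)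
    _ = ∫ s, ∫ x, (z s * W x s) * p x ∂μ := swap
    _ = ∫ s, z s * (if 0 ≤ s then ∫ x in {x | s ≤ y x}, p x ∂μ
          else -∫ x in {x | y x ≤ s}, p x ∂μ) :=
        MeasureTheory.integral_congr_ae (Filter.Eventually.of_forall fun s => hR s)
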